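/- Two words u, v over X^± represent the same element of the free inverse monoid FIM(X) if and only if their Munn trees coincide: that is, u and v reduce to the same element of the free group FG(X), and the sets of free-group elements represented by the prefixes of u and of v generate the same subtree of the Cayley graph (equivalently, the sets of reduced prefixes of u and of v have the same prefix-closure). -/

import Mathlib

/-- The symmetric alphabet `X^± = X ∪ X̄`, encoded as pairs (letter, sign). -/
abbrev Letter (X : Type) : Type := X × Bool

/-- Formal inverse of a letter. -/
def linv {X : Type} (a : Letter X) : Letter X := (a.1, !a.2)

/-- `wordInv v` is `v̄`: the reverse of `v` with every letter replaced by its inverse. -/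
def wordInv {X : Type} (v : List (Letter X)) : List (Letter X) := v.reverse.map linv

/-- The vertex set of the Munn tree of `w`: reductions of all prefixes of `w` in FG(X). -/
def munn {X : Type} (w : List (Letter X)) : Set (FreeGroup X) :=
  {g | ∃ p : List (Letter X), p <+: w ∧ FreeGroup.mk p = g}

/-- A word represents an idempotent of FIM(X) iff it reduces to 1 in FG(X). -/
def IsIdemWord {X : Type} (w : List (Letter X)) : Prop := FreeGroup.mk w = 1

/-- A word is reduced iff it has no adjacent mutually inverse letters. -/
def Reduced {X : Type} (w : List (Letter X)) : Prop :=
  List.Chain' (fun a b => b ≠ linv a) w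

/-- The Munn tree of `w` contains the edge from (the reduced word) `p` to `p · a`. -/
def EdgeIn {X : Type} (w : List (Letter X)) (p : List (Letter X)) (a : Letter X) : Prop :=
  Reduced (p ++ [a]) ∧ FreeGroup.mk p ∈ munn w ∧ FreeGroup.mk (p ++ [a]) ∈ munn w

/-- An idempotent word avoids `x` iff its Munn tree omits the edge `(ε, x)`. -/
def Avoids {X : Type} (w : List (Letter X)) (x : Letter X) : Prop := ¬ EdgeIn w [] x

/-- Equality in the free inverse monoid FIM(X): equality of Munn trees. -/
def EqFIM {X : Type} (u v : List (Letter X)) : Prop :=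
  FreeGroup.mk u = FreeGroup.mk v ∧ munn u = munn v

/-- The alphabet `X^± ∪ {#}`. -/
abbrev HSym (X : Type) : Type := Letter X ⊕ Unit

/-- The hashSym symbol. -/
def hashSym {X : Type} : HSym X := Sum.inr ()

/-- `encode u v = u # v̄`. -/
def encode {X : Type} (u v : List (Letter X)) : List (HSym X) :=
  u.map Sum.inl ++ hashSym :: (wordInv v).map Sum.inl


instance {T N : Type} [DecidableEq T] [DecidableEq N] : DecidableEq (ContextFreeRule T N) :=
  fun a b => decidable_of_iff (a.input = b.input ∧ a.output = b.output)
    (by cases a; cases b; simp)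

/-- Interleaving `e₁x₁e₂x₂⋯e_mx_m`. -/
def interE {X : Type} (es : List (List (Letter X))) (xs : List (Letter X)) : List (Letter X) :=
  (List.zipWith (fun e x => e ++ [x]) es xs).flatten

/-- Interleaving `y₁f₁y₂f₂⋯y_nf_n`. -/
def interF {X : Type} (ys : List (Letter X)) (fs : List (List (Letter X))) : List (Letter X) :=
  (List.zipWith (fun y f => y :: f) ys fs).flatten

/-- Derivability of a terminal word from a given nonterminal of a grammar. -/
def DerivesFrom {T : Type} (g : ContextFreeGrammar T) (n : g.NT) (w : List T) : Prop :=
  g.Derives [Symbol.nonterminal n] (w.map Symbol.terminal)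

/-- The Vagner relations: `w w⁻¹ w = w` and `(w w⁻¹)(z z⁻¹) = (z z⁻¹)(w w⁻¹)`. -/
def vagnerRel {X : Type} : FreeMonoid (Letter X) → FreeMonoid (Letter X) → Prop :=
  fun a b =>
    (∃ w : List (Letter X),
        a = FreeMonoid.ofList (w ++ wordInv w ++ w) ∧ b = FreeMonoid.ofList w) ∨
    (∃ w z : List (Letter X),
        a = FreeMonoid.ofList (w ++ wordInv w ++ (z ++ wordInv z)) ∧
        b = FreeMonoid.ofList (z ++ wordInv z ++ (w ++ wordInv w)))

/-- The Vagner congruence on the free monoid on `X^±`, presenting FIM(X). -/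
def vagnerCon (X : Type) : Con (FreeMonoid (Letter X)) := conGen vagnerRel

set_option linter.unusedSectionVars false

namespace Munn
variable {X : Type}
def Rel (u v : List (Letter X)) : Prop :=
  vagnerCon X (FreeMonoid.ofList u) (FreeMonoid.ofList v)
lemma rel_refl (u : List (Letter X)) : Rel u u := (vagnerCon X).refl _
lemma rel_symm {u v : List (Letter X)} (h : Rel u v) : Rel v u := (vagnerCon X).symm h
lemma rel_trans {u v w : List (Letter X)} (h1 : Rel u v) (h2 : Rel v w) : Rel u w :=
  (vagnerCon X).trans h1 h2
lemma rel_append {u₁ v₁ u₂ v₂ : List (Letter X)} (h1 : Rel u₁ v₁) (h2 : Rel u₂ v₂) :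
    Rel (u₁ ++ u₂) (v₁ ++ v₂) := (vagnerCon X).mul h1 h2
lemma rel_base1 (w : List (Letter X)) : Rel (w ++ wordInv w ++ w) w :=
  ConGen.Rel.of _ _ (Or.inl ⟨w, rfl, rfl⟩)
lemma rel_base2 (w z : List (Letter X)) :
    Rel (w ++ wordInv w ++ (z ++ wordInv z)) (z ++ wordInv z ++ (w ++ wordInv w)) :=
  ConGen.Rel.of _ _ (Or.inr ⟨w, z, rfl, rfl⟩)
lemma wordInv_wordInv (u : List (Letter X)) : wordInv (wordInv u) = u := by
  simp [wordInv, List.map_reverse, Function.comp_def, linv]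
lemma rel_of_eq {u v : List (Letter X)} (h : u = v) : Rel u v := h ▸ rel_refl u

lemma wordInv_append (u v : List (Letter X)) : wordInv (u ++ v) = wordInv v ++ wordInv u := by
  simp [wordInv]

lemma wordInv_eq_invRev (u : List (Letter X)) : wordInv u = FreeGroup.invRev u := by
  simp [wordInv, FreeGroup.invRev, List.map_reverse, linv]

lemma mk_wordInv (u : List (Letter X)) : FreeGroup.mk (wordInv u) = (FreeGroup.mk u)⁻¹ := by
  rw [wordInv_eq_invRev, ← FreeGroup.inv_mk]

/-- block -/
def B (w : List (Letter X)) : List (Letter X) := w ++ wordInv w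
def EB (L : List (List (Letter X))) : List (Letter X) := (L.map B).flatten

lemma EB_nil : EB ([] : List (List (Letter X))) = [] := rfl
lemma EB_cons (w : List (Letter X)) (L) : EB (w :: L) = B w ++ EB L := rfl
lemma EB_append (L₁ L₂ : List (List (Letter X))) : EB (L₁ ++ L₂) = EB L₁ ++ EB L₂ := by
  simp [EB]
lemma EB_singleton (w : List (Letter X)) : EB [w] = B w := by simp [EB]

lemma rel_absorb (w : List (Letter X)) : Rel (B w ++ w) w := by
  simpa [B, List.append_assoc] using rel_base1 w

lemma rel_Bcomm (w z : List (Letter X)) : Rel (B w ++ B z) (B z ++ B w) := by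
  simpa [B, List.append_assoc] using rel_base2 w z

lemma rel_BB (w : List (Letter X)) : Rel (B w ++ B w) (B w) := by
  have := rel_append (rel_base1 w) (rel_refl (wordInv w))
  simpa [B, List.append_assoc] using this

lemma rel_EB_perm {L₁ L₂ : List (List (Letter X))} (h : L₁.Perm L₂) : Rel (EB L₁) (EB L₂) := by
  induction h with
  | nil => exact rel_refl _
  | cons x _ ih => exact rel_append (rel_refl (B x)) ih
  | swap x y l =>
      have h1 : Rel (B y ++ B x) (B x ++ B y) := rel_Bcomm y x
      have := rel_append h1 (rel_refl (EB l))
      simpa [EB_cons, List.append_assoc] using this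
  | trans _ _ ih1 ih2 => exact rel_trans ih1 ih2

lemma rel_EB_dedup [DecidableEq X] (L : List (List (Letter X))) : Rel (EB L) (EB L.dedup) := by
  induction L with
  | nil => exact rel_refl _
  | cons a l ih =>
      by_cases h : a ∈ l
      · rw [List.dedup_cons_of_mem h]
        obtain ⟨t, hp⟩ : ∃ t, l.Perm (a :: t) := ⟨_, List.perm_cons_erase h⟩
        have s1 : Rel (EB (a :: l)) (B a ++ (B a ++ EB t)) :=
          rel_append (rel_refl (B a)) (rel_EB_perm hp)
        have s2 : Rel (B a ++ (B a ++ EB t)) (B a ++ EB t) := by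
          have := rel_append (rel_BB a) (rel_refl (EB t))
          simpa [List.append_assoc] using this
        have s3 : Rel (B a ++ EB t) (EB l) := rel_symm (rel_EB_perm hp)
        exact rel_trans (rel_trans (rel_trans s1 s2) s3) ih
      · rw [List.dedup_cons_of_notMem h]
        exact rel_append (rel_refl (B a)) ih

lemma rel_EB_toFinset [DecidableEq X] {L₁ L₂ : List (List (Letter X))}
    (h : L₁.toFinset = L₂.toFinset) : Rel (EB L₁) (EB L₂) := by
  have hp := List.toFinset_eq_iff_perm_dedup.mp h
  exact rel_trans (rel_EB_dedup L₁)
    (rel_trans (rel_EB_perm hp) (rel_symm (rel_EB_dedup L₂)))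

lemma linv_linv_comp : (linv ∘ linv : Letter X → Letter X) = id :=
  funext fun a => by simp [linv]

/-- The key cancellation lemma. -/
lemma rel_step (r : List (Letter X)) (b : Letter X) :
    Rel (B (r ++ [b]) ++ r) (r ++ [b, linv b]) := by
  have e1 : B (r ++ [b]) ++ r
      = r ++ (B [b] ++ B (wordInv r)) := by
    simp [B, wordInv, List.map_reverse, List.append_assoc, wordInv_wordInv, linv_linv_comp]
  have s1 : Rel (r ++ (B [b] ++ B (wordInv r))) (r ++ (B (wordInv r) ++ B [b])) :=
    rel_append (rel_refl r) (rel_Bcomm [b] (wordInv r))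
  have e2 : r ++ (B (wordInv r) ++ B [b])
      = (r ++ wordInv r ++ r) ++ [b, linv b] := by
    simp [B, wordInv_wordInv, List.append_assoc, wordInv, linv_linv_comp]
  have s2 : Rel ((r ++ wordInv r ++ r) ++ [b, linv b]) (r ++ [b, linv b]) :=
    rel_append (rel_base1 r) (rel_refl [b, linv b])
  exact rel_trans (rel_of_eq e1) (rel_trans s1 (rel_trans (rel_of_eq e2) s2))

section ReduceLemmas
variable [DecidableEq X]

lemma reduce_eq_self_of_reduced {L : List (Letter X)} (h : Reduced L) :
    FreeGroup.reduce L = L := by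
  induction L with
  | nil => rfl
  | cons x L ih =>
      have htail : Reduced L := h.tail
      rw [FreeGroup.reduce.cons, ih htail]
      cases L with
      | nil => rfl
      | cons hd tl =>
          have hx : hd ≠ linv x := (List.isChain_cons_cons.mp h).1
          have : ¬(x.1 = hd.1 ∧ x.2 = !hd.2) := by
            rintro ⟨h1, h2⟩
            apply hx
            cases x; cases hd
            simp_all [linv]
          simp only [List.casesOn]
          simp [this]

lemma reduced_reduce (L : List (Letter X)) : Reduced (FreeGroup.reduce L) := by
  induction L with
  | nil => exact List.isChain_nil
  | cons x L ih =>
      rw [FreeGroup.reduce.cons]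
      cases hr : FreeGroup.reduce L with
      | nil => exact List.isChain_singleton x
      | cons hd tl =>
          rw [hr] at ih
          by_cases h : x.1 = hd.1 ∧ x.2 = !hd.2
          · simp only [h, and_self, if_true]
            exact ih.tail
          · simp only [h, if_false]
            refine List.isChain_cons_cons.mpr ⟨?_, ih⟩
            intro hcontra
            apply h
            rw [hcontra]
            cases x
            simp [linv]

end ReduceLemmas
section More
variable [DecidableEq X]

lemma reduced_concat_or {r : List (Letter X)} (h : Reduced r) (a : Letter X) :
    Reduced (r ++ [a]) ∨ ∃ r₀ b, r = r₀ ++ [b] ∧ a = linv b := by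
  rcases List.eq_nil_or_concat' r with rfl | ⟨r₀, b, rfl⟩
  · left; exact List.isChain_singleton a
  · by_cases hab : a = linv b
    · right; exact ⟨r₀, b, rfl, hab⟩
    · left
      apply List.isChain_append.mpr
      refine ⟨h, List.isChain_singleton a, ?_⟩
      intro x hx y hy
      simp at hy
      subst hy
      rw [List.getLast?_concat] at hx
      simp at hx
      subst hx
      exact hab

lemma mk_concat_cancel (r₀ : List (Letter X)) (b : Letter X) :
    FreeGroup.mk (r₀ ++ [b, linv b]) = FreeGroup.mk r₀ := by
  have hstep : FreeGroup.Red.Step (r₀ ++ (b.1, b.2) :: (b.1, !b.2) :: []) (r₀ ++ []) :=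
    FreeGroup.Red.Step.not
  have : FreeGroup.mk (r₀ ++ (b.1, b.2) :: (b.1, !b.2) :: []) = FreeGroup.mk (r₀ ++ []) := by
    rw [← FreeGroup.quot_mk_eq_mk, ← FreeGroup.quot_mk_eq_mk]
    exact Quot.sound hstep
  simpa [linv] using this

lemma reduce_concat_red {u : List (Letter X)} {a : Letter X}
    (h : Reduced (FreeGroup.reduce u ++ [a])) :
    FreeGroup.reduce (u ++ [a]) = FreeGroup.reduce u ++ [a] := by
  have hmk : FreeGroup.mk (u ++ [a]) = FreeGroup.mk (FreeGroup.reduce u ++ [a]) := by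
    rw [← FreeGroup.mul_mk, ← FreeGroup.mul_mk, FreeGroup.reduce.self]
  rw [FreeGroup.reduce.sound hmk, reduce_eq_self_of_reduced h]

lemma reduce_concat_cancel {u r₀ : List (Letter X)} {a b : Letter X}
    (hr : FreeGroup.reduce u = r₀ ++ [b]) (hab : a = linv b) :
    FreeGroup.reduce (u ++ [a]) = r₀ := by
  have hred : Reduced r₀ := by
    have := reduced_reduce (X := X) u
    rw [hr] at this
    exact this.prefix ⟨[b], rfl⟩
  have hmk : FreeGroup.mk (u ++ [a]) = FreeGroup.mk r₀ := by
    have h1 : FreeGroup.mk (u ++ [a]) = FreeGroup.mk (r₀ ++ [b, linv b]) := by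
      rw [← FreeGroup.mul_mk, ← FreeGroup.mul_mk]
      rw [show FreeGroup.mk u = FreeGroup.mk (r₀ ++ [b]) by
        rw [← hr, FreeGroup.reduce.self], ← FreeGroup.mul_mk, hab]
      simp [mul_assoc, FreeGroup.mul_mk]
    rw [h1, mk_concat_cancel]
  rw [FreeGroup.reduce.sound hmk, reduce_eq_self_of_reduced hred]

end More

lemma prefix_append_cases {p u v : List (Letter X)} (h : p <+: u ++ v) :
    p <+: u ∨ ∃ q, q <+: v ∧ p = u ++ q := by
  rcases le_or_gt p.length u.length with hl | hl
  · exact Or.inl (List.prefix_of_prefix_length_le h (u.prefix_append v) hl)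
  · have hu : u <+: p :=
      List.prefix_of_prefix_length_le (u.prefix_append v) h (le_of_lt hl)
    obtain ⟨q, rfl⟩ := hu
    obtain ⟨t, ht⟩ := h
    refine Or.inr ⟨q, ⟨t, ?_⟩, rfl⟩
    apply List.append_cancel_left (as := u)
    rw [← List.append_assoc]
    exact ht

lemma munn_append (u v : List (Letter X)) :
    munn (u ++ v) = munn u ∪ (fun h => FreeGroup.mk u * h) '' munn v := by
  ext g
  constructor
  · rintro ⟨p, hp, rfl⟩
    rcases prefix_append_cases hp with h | ⟨q, hq, rfl⟩
    · exact Or.inl ⟨p, h, rfl⟩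
    · exact Or.inr ⟨FreeGroup.mk q, ⟨q, hq, rfl⟩,
        show FreeGroup.mk u * FreeGroup.mk q = FreeGroup.mk (u ++ q) from FreeGroup.mul_mk⟩
  · rintro (⟨p, hp, rfl⟩ | ⟨h, ⟨q, hq, rfl⟩, rfl⟩)
    · exact ⟨p, hp.trans (u.prefix_append v), rfl⟩
    · exact ⟨u ++ q, by simpa using hq,
        (show FreeGroup.mk u * FreeGroup.mk q = FreeGroup.mk (u ++ q) from FreeGroup.mul_mk).symm⟩

lemma munn_wordInv_image (w : List (Letter X)) :
    (fun h => FreeGroup.mk w * h) '' munn (wordInv w) = munn w := by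
  ext g
  constructor
  · rintro ⟨h, ⟨p, ⟨q, hq⟩, rfl⟩, rfl⟩
    have hw : w = wordInv q ++ wordInv p := by
      rw [← wordInv_wordInv w, ← hq, wordInv_append]
    refine ⟨wordInv q, ⟨wordInv p, hw.symm⟩, ?_⟩
    have : FreeGroup.mk w * FreeGroup.mk p = FreeGroup.mk (wordInv q) := by
      rw [hw, ← FreeGroup.mul_mk, mk_wordInv p, mul_assoc, inv_mul_cancel, mul_one]
    exact this.symm
  · rintro ⟨p, ⟨q, hq⟩, rfl⟩
    refine ⟨FreeGroup.mk (wordInv q), ⟨wordInv q, ⟨wordInv p, ?_⟩, rfl⟩, ?_⟩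
    · rw [← wordInv_append, hq]
    · show FreeGroup.mk w * FreeGroup.mk (wordInv q) = FreeGroup.mk p
      rw [mk_wordInv, ← hq, ← FreeGroup.mul_mk, mul_assoc, mul_inv_cancel, mul_one]

lemma mk_B (w : List (Letter X)) : FreeGroup.mk (B w) = 1 := by
  rw [B, ← FreeGroup.mul_mk, mk_wordInv, mul_inv_cancel]

lemma munn_B (w : List (Letter X)) : munn (B w) = munn w := by
  rw [B, munn_append, munn_wordInv_image, Set.union_self]

lemma munn_idem_append {e : List (Letter X)} (w : List (Letter X))
    (he : FreeGroup.mk e = 1) : munn (e ++ w) = munn e ∪ munn w := by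
  rw [munn_append, he]
  simp

/-- The congruence of Munn-tree equality. -/
def munnCon (X : Type) : Con (FreeMonoid (Letter X)) where
  r a b := FreeGroup.mk (FreeMonoid.toList a) = FreeGroup.mk (FreeMonoid.toList b) ∧
    munn (FreeMonoid.toList a) = munn (FreeMonoid.toList b)
  iseqv := ⟨fun _ => ⟨rfl, rfl⟩, fun h => ⟨h.1.symm, h.2.symm⟩,
    fun h1 h2 => ⟨h1.1.trans h2.1, h1.2.trans h2.2⟩⟩
  mul' := by
    rintro a b c d ⟨h1, h2⟩ ⟨h3, h4⟩
    constructor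
    · rw [FreeMonoid.toList_mul, FreeMonoid.toList_mul, ← FreeGroup.mul_mk, ← FreeGroup.mul_mk,
        h1, h3]
    · rw [FreeMonoid.toList_mul, FreeMonoid.toList_mul, munn_append, munn_append, h1, h2, h4]

lemma vagner_le_munnCon : vagnerCon X ≤ munnCon X := by
  apply Con.conGen_le.mpr
  rintro a b h
  rcases h with ⟨w, ha, hb⟩ | ⟨w, z, ha, hb⟩
  · rw [ha, hb]
    constructor
    · show FreeGroup.mk (w ++ wordInv w ++ w) = FreeGroup.mk w
      rw [← FreeGroup.mul_mk, ← FreeGroup.mul_mk, mk_wordInv]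
      group
    · show munn (w ++ wordInv w ++ w) = munn w
      rw [show w ++ wordInv w ++ w = B w ++ w from rfl, munn_idem_append w (mk_B w), munn_B,
        Set.union_self]
  · rw [ha, hb]
    constructor
    · show FreeGroup.mk (w ++ wordInv w ++ (z ++ wordInv z))
        = FreeGroup.mk (z ++ wordInv z ++ (w ++ wordInv w))
      rw [show w ++ wordInv w ++ (z ++ wordInv z) = B w ++ B z from rfl,
        show z ++ wordInv z ++ (w ++ wordInv w) = B z ++ B w from rfl,
        ← FreeGroup.mul_mk, ← FreeGroup.mul_mk, mk_B, mk_B]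
    · show munn (w ++ wordInv w ++ (z ++ wordInv z))
        = munn (z ++ wordInv z ++ (w ++ wordInv w))
      rw [show w ++ wordInv w ++ (z ++ wordInv z) = B w ++ B z from rfl,
        show z ++ wordInv z ++ (w ++ wordInv w) = B z ++ B w from rfl,
        munn_idem_append _ (mk_B w), munn_idem_append _ (mk_B z), munn_B, munn_B,
        Set.union_comm]

lemma rel_congr {u u' v v' : List (Letter X)} (hu : u = u') (hv : v = v') (h : Rel u v) :
    Rel u' v' := hu ▸ hv ▸ h

section NF
variable [DecidableEq X]

def tl (u : List (Letter X)) : List (List (Letter X)) := u.inits.map FreeGroup.reduce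

lemma inits_concat (u : List (Letter X)) (a : Letter X) :
    (u ++ [a]).inits = u.inits ++ [u ++ [a]] := by
  simp [List.inits_append]

lemma tl_concat (u : List (Letter X)) (a : Letter X) :
    tl (u ++ [a]) = tl u ++ [FreeGroup.reduce (u ++ [a])] := by
  rw [tl, inits_concat, List.map_append, List.map_singleton, tl]

lemma rel_nf (u : List (Letter X)) : Rel u (EB (tl u) ++ FreeGroup.reduce u) := by
  induction u using List.reverseRecOn with
  | nil => exact rel_refl []
  | append_singleton u a ih =>
      have h1 : Rel (u ++ [a]) (EB (tl u) ++ (FreeGroup.reduce u ++ [a])) := by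
        have := rel_append ih (rel_refl [a])
        exact rel_congr rfl (by rw [List.append_assoc]) this
      rcases reduced_concat_or (reduced_reduce u) a with hred | ⟨r₀, b, hr, hab⟩
      · -- no cancellation
        have hra : FreeGroup.reduce (u ++ [a]) = FreeGroup.reduce u ++ [a] :=
          reduce_concat_red hred
        rw [tl_concat, hra, EB_append, EB_singleton]
        have s2 : Rel (EB (tl u) ++ (B (FreeGroup.reduce u ++ [a]) ++ (FreeGroup.reduce u ++ [a])))
            (EB (tl u) ++ (FreeGroup.reduce u ++ [a])) :=
          rel_append (rel_refl _) (rel_absorb _)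
        refine rel_trans h1 (rel_congr rfl ?_ (rel_symm s2))
        simp [List.append_assoc]
      · -- cancellation
        have hra : FreeGroup.reduce (u ++ [a]) = r₀ := reduce_concat_cancel hr hab
        have hmem : FreeGroup.reduce u ∈ tl u :=
          List.mem_map.mpr ⟨u, (List.mem_inits _ _).mpr (List.prefix_refl u), rfl⟩
        have hfin : (tl u ++ [FreeGroup.reduce u]).toFinset = (tl u).toFinset := by
          rw [List.toFinset_append]
          simp only [List.toFinset_cons, List.toFinset_nil, insert_empty_eq]
          exact Finset.union_eq_left.mpr (by simpa using hmem)
        rw [tl_concat, hra, EB_append, EB_singleton]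
        -- chain
        have c1 : Rel (u ++ [a]) (EB (tl u) ++ (r₀ ++ [b, linv b])) := by
          refine rel_trans h1 (rel_of_eq ?_)
          rw [hr, hab]
          simp [List.append_assoc]
        have c2 : Rel (EB (tl u) ++ (r₀ ++ [b, linv b]))
            (EB (tl u) ++ (B (r₀ ++ [b]) ++ r₀)) :=
          rel_append (rel_refl _) (rel_symm (rel_step r₀ b))
        have c3 : Rel (EB (tl u) ++ (B (r₀ ++ [b]) ++ r₀)) (EB (tl u) ++ r₀) := by
          have := rel_append (rel_EB_toFinset hfin) (rel_refl r₀)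
          refine rel_congr ?_ rfl this
          rw [EB_append, EB_singleton, hr]
          simp [List.append_assoc]
        have c4 : Rel (EB (tl u) ++ r₀) (EB (tl u) ++ B r₀ ++ r₀) := by
          have := rel_append (rel_refl (EB (tl u))) (rel_symm (rel_absorb r₀))
          exact rel_congr rfl (by rw [List.append_assoc]) this
        exact rel_trans (rel_trans (rel_trans c1 c2) c3) c4

end NF
end Munn


/-- `u = v` in FIM(X) iff their Munn trees coincide: same reduction in FG(X) and the
same (prefix-closed) vertex sets. -/
theorem eq_fim_iff_munn {X : Type} [Fintype X] (u v : List (Letter X)) :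
    vagnerCon X (FreeMonoid.ofList u) (FreeMonoid.ofList v) ↔
      (FreeGroup.mk u = FreeGroup.mk v ∧ munn u = munn v) := by
  classical
  constructor
  · intro h
    exact Munn.vagner_le_munnCon h
  · rintro ⟨h1, h2⟩
    have hred : FreeGroup.reduce u = FreeGroup.reduce v := FreeGroup.reduce.sound h1
    have key : ∀ {w₁ w₂ : List (Letter X)}, munn w₁ = munn w₂ →
        ∀ x, (∃ p, p <+: w₁ ∧ FreeGroup.reduce p = x) →
          ∃ q, q <+: w₂ ∧ FreeGroup.reduce q = x := by
      rintro w₁ w₂ hw x ⟨p, hp, rfl⟩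
      have : FreeGroup.mk p ∈ munn w₂ := hw ▸ ⟨p, hp, rfl⟩
      obtain ⟨q, hq, hmk⟩ := this
      exact ⟨q, hq, FreeGroup.reduce.sound hmk⟩
    have hfin : (Munn.tl u).toFinset = (Munn.tl v).toFinset := by
      ext x
      simp only [List.mem_toFinset, Munn.tl, List.mem_map, List.mem_inits]
      exact ⟨key h2 x, key h2.symm x⟩
    exact Munn.rel_trans (Munn.rel_nf u)
      (Munn.rel_trans
        (Munn.rel_append (Munn.rel_EB_toFinset hfin) (Munn.rel_of_eq hred))
        (Munn.rel_symm (Munn.rel_nf v)))
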